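/- If n and m are positive integers with n < m and a(n) + 2^n = a(m) + 2^m, then n = 5 and m = 9; moreover a(5) + 2^5 = a(9) + 2^9 = 55. -/

import Mathlib

/-- The sequence `a` defined by `a 0 = 1`, `a 1 = -1`,
`a n = -3 * a (n-1) - 4 * a (n-2)` for `n ≥ 2`. -/
def a : ℕ → ℤ
  | 0 => 1
  | 1 => -1
  | n + 2 => -3 * a (n + 1) - 4 * a n

def aa : ℕ → ℤ
  | 0 => 1
  | 1 => -5
  | n + 2 => -3 * aa (n + 1) - 4 * aa n

lemma key_ident (n : ℕ) :
    aa n ^ 2 + 7 * a n ^ 2 = 2 ^ (2*n+3) ∧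
    aa (n+1) ^ 2 + 7 * a (n+1) ^ 2 = 2 ^ (2*n+5) ∧
    aa n * aa (n+1) + 7 * (a n * a (n+1)) = -3 * 2 ^ (2*n+2) := by
  induction n with
  | zero => norm_num [a, aa]
  | succ k ih =>
    obtain ⟨h1, h2, h3⟩ := ih
    have ea : a (k+2) = -3 * a (k+1) - 4 * a k := rfl
    have eaa : aa (k+2) = -3 * aa (k+1) - 4 * aa k := rfl
    refine ⟨h2, ?_, ?_⟩
    · rw [show k+1+1 = k+2 from rfl, ea, eaa]
      linear_combination 9*h2 + 16*h1 + 24*h3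
    · rw [show k+1+1 = k+2 from rfl, ea, eaa]
      linear_combination (-3)*h2 + (-4)*h3

lemma a_odd : ∀ n : ℕ, ∃ k : ℤ, a n = 2*k+1 := by
  have H : ∀ n : ℕ, (∃ k : ℤ, a n = 2*k+1) ∧ (∃ k : ℤ, a (n+1) = 2*k+1) := by
    intro n
    induction n with
    | zero => exact ⟨⟨0, by norm_num [a]⟩, ⟨-1, by norm_num [a]⟩⟩
    | succ k ih =>
      obtain ⟨⟨i, hi⟩, ⟨j, hj⟩⟩ := ih
      refine ⟨⟨j, hj⟩, ⟨-3*j - 4*i - 4, ?_⟩⟩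
      rw [show k+1+1 = k+2 from rfl, show a (k+2) = -3 * a (k+1) - 4 * a k from rfl,
        hi, hj]
      ring
  exact fun n => (H n).1

lemma aux1 (c : ℤ) (h : c ≠ 0) : 1 ≤ c^2 := by
  rcases lt_or_gt_of_ne h with h' | h' <;> nlinarith

lemma aux2 (A c W : ℤ) (hA : 2 ≤ A) (hPm : W^2 + 7*(c-A)^2 = 8*A^2) (hc2 : 1 ≤ c^2) :
    2*(A + 7*c) ≤ 56*c^2 + 1 := by
  have h7 : (7*c - 7*A)^2 ≤ 56*A^2 := by nlinarith [sq_nonneg W]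
  have hA4 : (4:ℤ) ≤ A^2 := by nlinarith
  have hSpos : 0 < A + 7*c := by
    by_contra hs
    push_neg at hs
    have hx : 7*c - 7*A ≤ -8*A := by linarith
    have hsq : 64*A^2 ≤ (7*c-7*A)^2 := by nlinarith
    linarith
  have hS2 : (A + 7*c)^2 = W^2 + 56*c^2 := by linear_combination -hPm
  have h1 : W^2 < (A+7*c)^2 := by nlinarith
  have h2 := abs_le_of_sq_le_sq' (le_of_lt h1) (le_of_lt hSpos)
  have h4 : W ≤ A + 7*c - 1 := by
    rcases h2 with ⟨_, h2b⟩
    rcases lt_or_eq_of_le h2b with h' | h'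
    · have := Int.lt_iff_add_one_le.mp h'
      linarith
    · exfalso; rw [h'] at h1; exact lt_irrefl _ h1
  have h5 : -(A + 7*c - 1) ≤ W := by
    rcases h2 with ⟨h2a, _⟩
    rcases lt_or_eq_of_le h2a with h' | h'
    · have := Int.lt_iff_add_one_le.mp h'
      linarith
    · exfalso; rw [← h'] at h1; rw [neg_sq] at h1; exact lt_irrefl _ h1
  nlinarith [mul_nonneg (by linarith : (0:ℤ) ≤ A+7*c-1-W) (by linarith : (0:ℤ) ≤ A+7*c-1+W)]

lemma aux3 (B an W c : ℤ) (hPn : W^2 + 7*an^2 = 8*B^2) (hc : an + B = c) :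
    49*c^2 ≤ 225*B^2 := by
  rw [← hc]
  nlinarith [sq_nonneg W, sq_nonneg (7*an - 7*B)]

lemma aux4 (c B : ℤ) (h : 49*c^2 ≤ 225*B^2) (hB : 0 ≤ B) : -(15*B) ≤ 7*c := by
  have h1 : (7*c)^2 ≤ (15*B)^2 := by nlinarith
  exact (abs_le_of_sq_le_sq' h1 (by linarith)).1

lemma m_le (n m : ℕ) (hn : 1 ≤ n) (hm : 1 ≤ m) (h : a n + 2^n = a m + 2^m) :
    m ≤ 2*n + 8 := by
  have Pm := (key_ident m).1
  have Pn := (key_ident n).1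
  have pm : (2:ℤ)^(2*m+3) = 8 * (2^m)^2 := by
    rw [pow_add, mul_comm 2 m, pow_mul]; ring
  have pn : (2:ℤ)^(2*n+3) = 8 * (2^n)^2 := by
    rw [pow_add, mul_comm 2 n, pow_mul]; ring
  rw [pm] at Pm
  rw [pn] at Pn
  have hA2 : (2:ℤ) ≤ 2^m := by
    calc (2:ℤ) = 2^1 := (pow_one 2).symm
    _ ≤ 2^m := pow_le_pow_right₀ (by norm_num) hm
  have hB2 : (2:ℤ) ≤ 2^n := by
    calc (2:ℤ) = 2^1 := (pow_one 2).symm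
    _ ≤ 2^n := pow_le_pow_right₀ (by norm_num) hn
  obtain ⟨z1, hz1⟩ : ∃ z : ℤ, (2:ℤ)^n = 2*z := ⟨2^(n-1), by rw [← pow_succ']; congr 1; omega⟩
  obtain ⟨A, hA⟩ : ∃ x : ℤ, (2:ℤ)^m = x := ⟨_, rfl⟩
  obtain ⟨B, hB⟩ : ∃ x : ℤ, (2:ℤ)^n = x := ⟨_, rfl⟩
  rw [hA] at Pm h hA2
  rw [hB] at Pn h hB2 hz1
  obtain ⟨c, hc⟩ : ∃ x : ℤ, a n + B = x := ⟨_, rfl⟩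
  rw [hc] at h
  have ham : a m = c - A := by linarith
  rw [ham] at Pm
  obtain ⟨k1, hk1⟩ := a_odd n
  have hc0 : c ≠ 0 := by omega
  have hc2 : 1 ≤ c^2 := aux1 c hc0
  have key : 2*(A + 7*c) ≤ 56*c^2 + 1 := aux2 A c (aa m) hA2 Pm hc2
  have hc225 : 49*c^2 ≤ 225*B^2 := aux3 B (a n) (aa n) c Pn hc
  have habs2 : -(15*B) ≤ 7*c := aux4 c B hc225 (by linarith)
  have hBB : 2*B ≤ B^2 := by nlinarith
  have final : A ≤ 256 * B^2 := by linarith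
  have e : (256:ℤ) * B^2 = 2^(2*n+8) := by
    rw [← hB, pow_add, Nat.mul_comm 2 n, pow_mul]
    ring
  have hfin : (2:ℤ)^m ≤ 2^(2*n+8) := by rw [hA, ← e]; exact final
  exact (pow_le_pow_iff_right₀ (by norm_num : (1:ℤ) < 2)).mp hfin

lemma root_exists : ∀ K, 3 ≤ K → ∃ u : ℤ, (2:ℤ)^K ∣ u^2 + 3*u + 4 ∧ u % 8 = 1 := by
  intro K hK
  induction K, hK using Nat.le_induction with
  | base => exact ⟨1, ⟨1, by norm_num⟩, rfl⟩
  | succ K hK ih =>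
    obtain ⟨u, ⟨w, hw⟩, h8⟩ := ih
    rcases Int.even_or_odd w with ⟨v, hv⟩ | ⟨v, hv⟩
    · exact ⟨u, ⟨v, by rw [hw, hv]; ring⟩, h8⟩
    · refine ⟨u + 2^K, ⟨v + u + 2 + 2^(K-1), ?_⟩, ?_⟩
      · have h2K : (2:ℤ)^K = 2 * 2^(K-1) := by
          rw [← pow_succ']
          congr 1
          omega
        calc (u + 2^K)^2 + 3*(u+2^K) + 4
            = (u^2 + 3*u + 4) + 2^K * (2*u + 2^K + 3) := by ring
          _ = 2^K * (2*v + 1) + 2^K * (2*u + 2^K + 3) := by rw [hw, hv]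
          _ = 2^(K+1) * (v + u + 2 + 2^(K-1)) := by rw [pow_succ]; rw [h2K]; ring
      · have h8d : (8:ℤ) ∣ 2^K := by
          have h3 : (2:ℤ)^3 ∣ 2^K := pow_dvd_pow 2 hK
          norm_num at h3 ⊢
          exact h3
        obtain ⟨z, hz⟩ := h8d
        omega

lemma u_mod16 (u : ℤ) (h16 : (16:ℤ) ∣ u^2 + 3*u + 4) (h8 : u % 8 = 1) : u % 16 = 9 := by
  have h : u % 16 = 1 ∨ u % 16 = 9 := by omega
  rcases h with h | h
  · exfalso
    obtain ⟨q, hq⟩ : ∃ q, u = 16*q + 1 := ⟨u / 16, by omega⟩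
    obtain ⟨w, hw⟩ := h16
    have : 16 * w = 16*(16*q*q + 5*q) + 8 := by rw [← hw, hq]; ring
    omega
  · exact h

lemma pow2t (u : ℤ) (h16 : u % 16 = 9) :
    ∀ t : ℕ, ∃ h : ℤ, u^(2^t) = 1 + 2^(t+3) * h ∧ h % 2 = 1 := by
  intro t
  induction t with
  | zero =>
    refine ⟨(u-1)/8, ?_, ?_⟩
    · norm_num
      omega
    · omega
  | succ t ih =>
    obtain ⟨g, hg, hgo⟩ := ih
    refine ⟨g + 2^(t+2) * g^2, ?_, ?_⟩
    · have e : (2:ℕ)^(t+1) = 2^t * 2 := by rw [pow_succ]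
      rw [e, pow_mul, hg]
      have e2 : (2:ℤ)^(t+1+3) = 2^(t+3) * 2 := by rw [pow_succ]
      rw [e2]
      have e3 : (2:ℤ)^(t+3) = 2^(t+2) * 2 := by rw [pow_succ]
      calc (1 + 2^(t+3)*g)^2 = 1 + 2^(t+3)*2*g + (2^(t+3))^2 * g^2 := by ring
        _ = 1 + 2^(t+3)*2 * (g + 2^(t+2) * g^2) := by rw [e3]; ring
    · obtain ⟨z, hz⟩ : ∃ z, (2:ℤ)^(t+2) = 2*z := ⟨2^(t+1), by rw [← pow_succ']⟩
      have e : g + 2^(t+2)*g^2 = g + 2*(z*g^2) := by rw [hz]; ring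
      rw [e]
      generalize z * g^2 = w
      omega

lemma odd_pow_lemma (h : ℤ) (j : ℕ) (hj : 1 ≤ j) :
    ∀ e : ℕ, ∃ g : ℤ, (1 + 2^j*h)^e = 1 + 2^j*g ∧ (g - e*h) % 2 = 0 := by
  intro e
  induction e with
  | zero => exact ⟨0, by norm_num⟩
  | succ e ih =>
    obtain ⟨g, hg, hp⟩ := ih
    refine ⟨g + h + 2^j*(g*h), ?_, ?_⟩
    · rw [pow_succ, hg]; ring
    · obtain ⟨z, hz⟩ : ∃ z, (2:ℤ)^j = 2*z := ⟨2^(j-1), by rw [← pow_succ']; congr 1; omega⟩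
      have e1 : g + h + 2^j*(g*h) - (e+1:ℕ)*h = (g - e*h) + 2*(z*(g*h)) := by
        push_cast; rw [hz]; ring
      rw [e1]
      generalize z * (g*h) = w
      omega

lemma rdiff (u : ℤ) (K : ℕ) (hu : (2:ℤ)^K ∣ u^2+3*u+4) :
    ∀ k, ∃ E : ℤ, a (k+1) - u * a k = (-3-u)^k * (-1-u) + 2^K * E := by
  obtain ⟨f, hf⟩ := hu
  intro k
  induction k with
  | zero => exact ⟨0, by norm_num [a]⟩
  | succ k ih =>
    obtain ⟨E, hE⟩ := ih
    refine ⟨(-3-u)*E - f * a k, ?_⟩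
    rw [show k+1+1 = k+2 from rfl, show a (k+2) = -3 * a (k+1) - 4 * a k from rfl]
    linear_combination (-3-u) * hE - (a k) * hf

lemma sdvd (b : ℤ) (k : ℕ) : (2:ℤ)^(2*k+1) ∣ (-3-(8*b+1))^k * (-1-(8*b+1)) := by
  induction k with
  | zero => exact ⟨-(1+4*b), by ring⟩
  | succ k ih =>
    obtain ⟨y, hy⟩ := ih
    refine ⟨(-(1+2*b))*y, ?_⟩
    have e : (-3-(8*b+1))^(k+1) * (-1-(8*b+1)) = (-3-(8*b+1)) * ((-3-(8*b+1))^k * (-1-(8*b+1))) := by ring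
    rw [e, hy]
    ring

lemma growth (n : ℕ) (hn : 8 ≤ n) : n + 8 < 2^(n-3) := by
  have h1 : n - 8 < 2^(n-8) := Nat.lt_two_pow_self
  have h2 : (2:ℕ)^(n-3) = 2^(n-8) * 32 := by
    rw [show n-3 = (n-8)+5 by omega, pow_add]
    norm_num
  omega

lemma no_big (n m : ℕ) (hn : 8 ≤ n) (hnm : n < m) (hmb : m ≤ 2*n+8)
    (h : a n + 2^n = a m + 2^m) : False := by
  obtain ⟨u, hu, hu8⟩ := root_exists (2*n+1) (by omega)
  have h16 : (16:ℤ) ∣ u^2+3*u+4 := by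
    refine dvd_trans ?_ hu
    have : (2:ℤ)^4 ∣ 2^(2*n+1) := pow_dvd_pow 2 (by omega)
    norm_num at this ⊢
    exact this
  have hu16 : u % 16 = 9 := u_mod16 u h16 hu8
  obtain ⟨b, hb⟩ : ∃ b, u = 8*b+1 := ⟨u/8, by omega⟩
  -- chain of congruences
  have chain : ∀ k, n ≤ k → (2:ℤ)^(2*n+1) ∣ a (k+1) - u * a k := by
    intro k hk
    obtain ⟨E, hE⟩ := rdiff u (2*n+1) hu k
    rw [hE]
    refine dvd_add ?_ ⟨E, rfl⟩
    have h1 := sdvd b k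
    rw [← hb] at h1
    exact dvd_trans (pow_dvd_pow 2 (by omega)) h1
  have iter : ∀ j, (2:ℤ)^(2*n+1) ∣ a (n+j) - u^j * a n := by
    intro j
    induction j with
    | zero => simp
    | succ j ih =>
      have h1 := chain (n+j) (by omega)
      have e : a (n+j+1) - u^(j+1) * a n
          = (a (n+j+1) - u * a (n+j)) + u * (a (n+j) - u^j * a n) := by ring
      rw [show n + (j+1) = n+j+1 from rfl, e]
      exact dvd_add h1 (Dvd.dvd.mul_left ih u)
  set d := m - n with hd
  have hmd : m = n + d := by omega
  have hD : (2:ℤ)^(2*n+1) ∣ a m - u^d * a n := by rw [hmd]; exact iter d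
  -- structure of u^d
  obtain ⟨t, e, he, hde⟩ := Nat.exists_eq_two_pow_mul_odd (n := d) (by omega)
  obtain ⟨g, hg, hgo⟩ := pow2t u hu16 t
  obtain ⟨G, hG, hGp⟩ := odd_pow_lemma g (t+3) (by omega) e
  have hud : u^d = 1 + 2^(t+3) * G := by
    rw [hde, pow_mul, hg, hG]
  have hGodd : G % 2 = 1 := by
    have hoe : Odd ((e:ℤ)) := Int.odd_coe_nat e |>.mpr he
    have hog : Odd g := Int.odd_iff.mpr hgo
    obtain ⟨w, hw⟩ : Odd ((e:ℤ) * g) := hoe.mul hog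
    rw [hw] at hGp
    omega
  -- main divisibility
  have ham : a m = a n + 2^n - 2^m := by linarith
  have hD2 : (2:ℤ)^(2*n+1) ∣ 2^n - 2^m - 2^(t+3) * (G * a n) := by
    have e2 : (2:ℤ)^n - 2^m - 2^(t+3) * (G * a n) = a m - u^d * a n := by
      rw [ham, hud]; ring
    rw [e2]; exact hD
  obtain ⟨k0, hk0⟩ := a_odd n
  have hGan : ∃ w : ℤ, G * a n = 2*w + 1 := by
    have hoG : Odd G := Int.odd_iff.mpr hGodd
    have hoa : Odd (a n) := ⟨k0, by omega⟩
    obtain ⟨w, hw⟩ := hoG.mul hoa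
    exact ⟨w, by omega⟩
  obtain ⟨w0, hw0⟩ := hGan
  -- case analysis on t+3 vs n
  rcases lt_trichotomy (t+3) n with hlt | heq | hgt
  · -- t+4 ≤ n : contradiction mod 2^(t+4)
    have c1 : (2:ℤ)^(t+4) ∣ 2^n := pow_dvd_pow 2 (by omega)
    have c2 : (2:ℤ)^(t+4) ∣ 2^m := pow_dvd_pow 2 (by omega)
    have c3 : (2:ℤ)^(t+4) ∣ 2^(2*n+1) := pow_dvd_pow 2 (by omega)
    have c4 : (2:ℤ)^(t+4) ∣ 2^(t+3) * (G * a n) := by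
      have e3 : (2:ℤ)^(t+3) * (G * a n) = 2^n - 2^m - (2^n - 2^m - 2^(t+3) * (G * a n)) := by ring
      rw [e3]
      exact dvd_sub (dvd_sub c1 c2) (dvd_trans c3 hD2)
    rw [pow_succ] at c4
    have c5 : (2:ℤ) ∣ G * a n := by
      have hne : ((2:ℤ)^(t+3)) ≠ 0 := by positivity
      rcases c4 with ⟨q, hq⟩
      refine ⟨q, ?_⟩
      have : (2:ℤ)^(t+3) * (G * a n) = 2^(t+3) * (2*q) := by rw [hq]; ring
      exact mul_left_cancel₀ hne this
    obtain ⟨q, hq⟩ := c5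
    omega
  · -- t+3 = n : size contradiction
    have hdl : 2^t ≤ d := by
      rw [hde]
      have : 1 ≤ e := he.pos
      calc 2^t = 2^t * 1 := by ring
      _ ≤ 2^t * e := by exact Nat.mul_le_mul_left _ this
    have ht : t = n - 3 := by omega
    rw [ht] at hdl
    have := growth n hn
    omega
  · -- n < t+3 : contradiction mod 2^(n+1)
    have c1 : (2:ℤ)^(n+1) ∣ 2^(t+3) * (G * a n) := (pow_dvd_pow 2 (by omega)).mul_right _
    have c2 : (2:ℤ)^(n+1) ∣ 2^m := pow_dvd_pow 2 (by omega)
    have c3 : (2:ℤ)^(n+1) ∣ 2^(2*n+1) := pow_dvd_pow 2 (by omega)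
    have c4 : (2:ℤ)^(n+1) ∣ 2^n := by
      have e3 : (2:ℤ)^n = (2^n - 2^m - 2^(t+3) * (G * a n)) + 2^(t+3) * (G * a n) + 2^m := by ring
      rw [e3]
      exact dvd_add (dvd_add (dvd_trans c3 hD2) c1) c2
    rw [pow_succ] at c4
    rcases c4 with ⟨q, hq⟩
    have hne : ((2:ℤ)^n) ≠ 0 := by positivity
    have : (2:ℤ)^n * 1 = 2^n * (2*q) := by linear_combination hq
    have h21 : (1:ℤ) = 2*q := mul_left_cancel₀ hne this
    omega

/-- The only pair of positive integers `n < m` with `a n + 2^n = a m + 2^m`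
is `(5, 9)`, and the common value there is `55`. -/
theorem only_repeat_a_add_two_pow (n m : ℕ) (hn : 0 < n) (hnm : n < m)
    (h : a n + 2 ^ n = a m + 2 ^ m) :
    n = 5 ∧ m = 9 ∧ a 5 + 2 ^ 5 = 55 ∧ a 9 + 2 ^ 9 = 55 := by
  have hm1 : 1 ≤ m := by omega
  have hb : m ≤ 2*n + 8 := m_le n m hn hm1 h
  have hn8 : n < 8 := by
    by_contra hc
    push_neg at hc
    exact no_big n m hc hnm hb h
  interval_cases n <;> interval_cases m <;> revert h <;> decide
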